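/- The four-dimensional Lie 3-algebra L with basis {e_1,e_2,e_3,e_4} and skew-symmetric ternary bracket [e_1,e_2,e_3]=e_4, [e_1,e_2,e_4]=−e_3, [e_1,e_3,e_4]=e_2, [e_2,e_3,e_4]=−e_1 is perfect, but the Leibniz algebra D_3(L) = L⊗L with bracket [a⊗b, c⊗d] = [a,c,d]⊗b + a⊗[b,c,d] is not perfect; in particular e_1⊗e_1 is not contained in [L⊗L, L⊗L]. -/

import Mathlib

open Function TensorProduct

section Prelude

variable {L : Type*}

/-- The nested (iterated) bracket: `nestBr b k` is the `k*(n-1)+1`-ary operation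
`ω_p(a_1,…,a_p) = b(a_1,…,a_{n-1}, nestBr b (k-1) (a_n,…,a_p))`. -/
def nestBr {n : ℕ} (b : (Fin n → L) → L) : (k : ℕ) → (Fin (k * (n - 1) + 1) → L) → L
  | 0, a => a ⟨0, Nat.succ_pos _⟩
  | k + 1, a =>
    b fun j : Fin n =>
      if h : (j : ℕ) < n - 1 then
        a ⟨(j : ℕ),
          Nat.lt_succ_of_lt (lt_of_lt_of_le h (Nat.le_mul_of_pos_left _ (Nat.succ_pos k)))⟩
      else
        nestBr b k fun i =>
          a ⟨(n - 1) + (i : ℕ), by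
            have h1 : (k + 1) * (n - 1) + 1 = (n - 1) + (k * (n - 1) + 1) := by ring
            rw [h1]
            exact Nat.add_lt_add_left i.isLt _⟩

/-- `f` is a derivation with respect to the `n`-linear operation `b`. -/
def IsNDeriv {n : ℕ} [AddCommMonoid L] (b : (Fin n → L) → L) (f : L → L) : Prop :=
  ∀ a : Fin n → L, f (b a) = ∑ i, b (Function.update a i (f (a i)))

/-- The fundamental identity of Leibniz `n`-algebras:
`[[x_1,…,x_n],y_2,…,y_n] = Σ_i [x_1,…,[x_i,y_2,…,y_n],…,x_n]`
(the entries `y 1, …, y (n-1)` play the role of `y_2,…,y_n`). -/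
def FundId {n : ℕ} [NeZero n] [AddCommMonoid L] (b : (Fin n → L) → L) : Prop :=
  ∀ x y : Fin n → L,
    b (Function.update y 0 (b x)) =
      ∑ i, b (Function.update x i (b (Function.update y 0 (x i))))

/-- The right-nested bracket `[x_1,[x_2,…,[x_m,x_{m+1}]…]]` built from a binary bracket. -/
def nested2 (b : L → L → L) : (m : ℕ) → (Fin (m + 1) → L) → L
  | 0, a => a 0
  | m + 1, a => b (a 0) (nested2 b m fun i => a i.succ)

end Prelude

section Aux
variable {K L : Type*} [Field K] [AddCommGroup L] [Module K L]

-- assume previous lemmas exist; re-declare minimal versions as axioms NOT allowed; just copy later.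
lemma updA0 (a x z w : L) : Function.update ![a, z, w] (0 : Fin 3) x = ![x, z, w] := by
  funext i; fin_cases i <;> simp [Function.update]
lemma updA1 (a x z w : L) : Function.update ![z, a, w] (1 : Fin 3) x = ![z, x, w] := by
  funext i; fin_cases i <;> simp [Function.update]
lemma updA2 (a x z w : L) : Function.update ![z, w, a] (2 : Fin 3) x = ![z, w, x] := by
  funext i; fin_cases i <;> simp [Function.update]
lemma b_add0 (b : MultilinearMap K (fun _ : Fin 3 => L) L) (x y z w : L) :
    b ![x + y, z, w] = b ![x, z, w] + b ![y, z, w] := by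
  simpa [updA0] using b.map_update_add ![x, z, w] 0 x y
lemma b_add1 (b : MultilinearMap K (fun _ : Fin 3 => L) L) (x y z w : L) :
    b ![z, x + y, w] = b ![z, x, w] + b ![z, y, w] := by
  simpa [updA1] using b.map_update_add ![z, x, w] 1 x y
lemma b_add2 (b : MultilinearMap K (fun _ : Fin 3 => L) L) (x y z w : L) :
    b ![z, w, x + y] = b ![z, w, x] + b ![z, w, y] := by
  simpa [updA2] using b.map_update_add ![z, w, x] 2 x y
lemma b_smul0 (b : MultilinearMap K (fun _ : Fin 3 => L) L) (c : K) (x z w : L) :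
    b ![c • x, z, w] = c • b ![x, z, w] := by
  simpa [updA0] using b.map_update_smul ![x, z, w] 0 c x
lemma b_smul1 (b : MultilinearMap K (fun _ : Fin 3 => L) L) (c : K) (x z w : L) :
    b ![z, c • x, w] = c • b ![z, x, w] := by
  simpa [updA1] using b.map_update_smul ![z, x, w] 1 c x
lemma b_smul2 (b : MultilinearMap K (fun _ : Fin 3 => L) L) (c : K) (x z w : L) :
    b ![z, w, c • x] = c • b ![z, w, x] := by
  simpa [updA2] using b.map_update_smul ![z, w, x] 2 c x

noncomputable def bilin (e : Module.Basis (Fin 4) K L) : L →ₗ[K] L →ₗ[K] K :=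
  LinearMap.mk₂ K (fun x y => ∑ i, e.repr x i * e.repr y i)
    (fun x x' y => by simp [add_mul, Finset.sum_add_distrib])
    (fun c x y => by simp [Finset.mul_sum, mul_assoc])
    (fun x y y' => by simp [mul_add, Finset.sum_add_distrib])
    (fun c x y => by simp [Finset.mul_sum]; ring_nf; simp [mul_assoc, mul_comm, mul_left_comm])

lemma bilin_basis (e : Module.Basis (Fin 4) K L) (i j : Fin 4) :
    bilin e (e i) (e j) = if i = j then 1 else 0 := by
  simp [bilin, Finsupp.single_apply, Fin.sum_univ_four]
  fin_cases i <;> fin_cases j <;> simp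

/-- The quadrilinear invariance form. -/
noncomputable def Qmap (e : Module.Basis (Fin 4) K L) (b : MultilinearMap K (fun _ : Fin 3 => L) L) :
    MultilinearMap K (fun _ : Fin 4 => L) K where
  toFun v := bilin e (b ![v 0, v 2, v 3]) (v 1) + bilin e (v 0) (b ![v 1, v 2, v 3])
  map_update_add' v i x y := by
    rename_i instE
    have hinst : instE = instDecidableEqFin 4 := Subsingleton.elim _ _
    subst hinst
    have hs : ∀ (u : Fin 4 → L) (a : L) (i : Fin 4), Function.update u i a i = a :=
      fun u a i => Function.update_self i a u
    have hn : ∀ (u : Fin 4 → L) (a : L) (i j : Fin 4), j ≠ i → Function.update u i a j = u j :=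
      fun u a i j h => Function.update_of_ne h a u
    fin_cases i <;>
      simp [hs, hn, b_add0, b_add1, b_add2, map_add,
        LinearMap.add_apply] <;> abel
  map_update_smul' v i c x := by
    rename_i instE
    have hinst : instE = instDecidableEqFin 4 := Subsingleton.elim _ _
    subst hinst
    have hs : ∀ (u : Fin 4 → L) (a : L) (i : Fin 4), Function.update u i a i = a :=
      fun u a i => Function.update_self i a u
    have hn : ∀ (u : Fin 4 → L) (a : L) (i j : Fin 4), j ≠ i → Function.update u i a j = u j :=
      fun u a i j h => Function.update_of_ne h a u
    fin_cases i <;>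
      simp [hs, hn, b_smul0, b_smul1, b_smul2, map_smul,
        LinearMap.smul_apply, smul_add, smul_eq_mul, mul_add]

lemma swap01 (b : MultilinearMap K (fun _ : Fin 3 => L) L)
    (hskew : ∀ (σ : Equiv.Perm (Fin 3)) (v : Fin 3 → L),
      b (v ∘ σ) = (Equiv.Perm.sign σ : ℤ) • b v) (x y z : L) :
    b ![x, y, z] = - b ![y, x, z] := by
  have h := hskew (Equiv.swap 0 1) ![y, x, z]
  have hv : (![y, x, z] ∘ (Equiv.swap (0:Fin 3) 1)) = ![x, y, z] := by
    funext i; fin_cases i <;> simp [Equiv.swap_apply_def]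
  rw [hv] at h
  rw [h, Equiv.Perm.sign_swap (by decide)]
  simp

lemma swap12 (b : MultilinearMap K (fun _ : Fin 3 => L) L)
    (hskew : ∀ (σ : Equiv.Perm (Fin 3)) (v : Fin 3 → L),
      b (v ∘ σ) = (Equiv.Perm.sign σ : ℤ) • b v) (x y z : L) :
    b ![x, y, z] = - b ![x, z, y] := by
  have h := hskew (Equiv.swap 1 2) ![x, z, y]
  have hv : (![x, z, y] ∘ (Equiv.swap (1:Fin 3) 2)) = ![x, y, z] := by
    funext i; fin_cases i <;> simp [Equiv.swap_apply_def]
  rw [hv] at h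
  rw [h, Equiv.Perm.sign_swap (by decide)]
  simp
set_option maxHeartbeats 4000000 in
lemma basis_inv {K L : Type*} [Field K] [AddCommGroup L] [Module K L]
    (b : MultilinearMap K (fun _ : Fin 3 => L) L)
    (e : Module.Basis (Fin 4) K L)
    (hskew : ∀ (σ : Equiv.Perm (Fin 3)) (v : Fin 3 → L),
      b (v ∘ σ) = (Equiv.Perm.sign σ : ℤ) • b v)
    (h123 : b ![e 0, e 1, e 2] = e 3)
    (h124 : b ![e 0, e 1, e 3] = - e 2)
    (h134 : b ![e 0, e 2, e 3] = e 1)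
    (h234 : b ![e 1, e 2, e 3] = - e 0)
    (hrep : ∀ i j k : Fin 4, (i = j ∨ i = k ∨ j = k) → b ![e i, e j, e k] = 0) :
    ∀ i m j k : Fin 4,
      bilin e (b ![e i, e j, e k]) (e m) + bilin e (e i) (b ![e m, e j, e k]) = 0 := by
    have sw01 := swap01 b hskew
    have sw12 := swap12 b hskew
    have v000 : b ![e 0, e 0, e 0] = 0 := hrep 0 0 0 (by decide)
    have v001 : b ![e 0, e 0, e 1] = 0 := hrep 0 0 1 (by decide)
    have v002 : b ![e 0, e 0, e 2] = 0 := hrep 0 0 2 (by decide)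
    have v003 : b ![e 0, e 0, e 3] = 0 := hrep 0 0 3 (by decide)
    have v010 : b ![e 0, e 1, e 0] = 0 := hrep 0 1 0 (by decide)
    have v011 : b ![e 0, e 1, e 1] = 0 := hrep 0 1 1 (by decide)
    have v012 : b ![e 0, e 1, e 2] = e 3 := by
      rw [h123]; try simp
    have v013 : b ![e 0, e 1, e 3] = -e 2 := by
      rw [h124]; try simp
    have v020 : b ![e 0, e 2, e 0] = 0 := hrep 0 2 0 (by decide)
    have v021 : b ![e 0, e 2, e 1] = -e 3 := by
      rw [sw12, h123]; try simp
    have v022 : b ![e 0, e 2, e 2] = 0 := hrep 0 2 2 (by decide)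
    have v023 : b ![e 0, e 2, e 3] = e 1 := by
      rw [h134]; try simp
    have v030 : b ![e 0, e 3, e 0] = 0 := hrep 0 3 0 (by decide)
    have v031 : b ![e 0, e 3, e 1] = e 2 := by
      rw [sw12, h124]; try simp
    have v032 : b ![e 0, e 3, e 2] = -e 1 := by
      rw [sw12, h134]; try simp
    have v033 : b ![e 0, e 3, e 3] = 0 := hrep 0 3 3 (by decide)
    have v100 : b ![e 1, e 0, e 0] = 0 := hrep 1 0 0 (by decide)
    have v101 : b ![e 1, e 0, e 1] = 0 := hrep 1 0 1 (by decide)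
    have v102 : b ![e 1, e 0, e 2] = -e 3 := by
      rw [sw01, h123]; try simp
    have v103 : b ![e 1, e 0, e 3] = e 2 := by
      rw [sw01, h124]; try simp
    have v110 : b ![e 1, e 1, e 0] = 0 := hrep 1 1 0 (by decide)
    have v111 : b ![e 1, e 1, e 1] = 0 := hrep 1 1 1 (by decide)
    have v112 : b ![e 1, e 1, e 2] = 0 := hrep 1 1 2 (by decide)
    have v113 : b ![e 1, e 1, e 3] = 0 := hrep 1 1 3 (by decide)
    have v120 : b ![e 1, e 2, e 0] = e 3 := by
      rw [sw12, sw01, h123]; try simp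
    have v121 : b ![e 1, e 2, e 1] = 0 := hrep 1 2 1 (by decide)
    have v122 : b ![e 1, e 2, e 2] = 0 := hrep 1 2 2 (by decide)
    have v123 : b ![e 1, e 2, e 3] = -e 0 := by
      rw [h234]; try simp
    have v130 : b ![e 1, e 3, e 0] = -e 2 := by
      rw [sw12, sw01, h124]; try simp
    have v131 : b ![e 1, e 3, e 1] = 0 := hrep 1 3 1 (by decide)
    have v132 : b ![e 1, e 3, e 2] = e 0 := by
      rw [sw12, h234]; try simp
    have v133 : b ![e 1, e 3, e 3] = 0 := hrep 1 3 3 (by decide)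
    have v200 : b ![e 2, e 0, e 0] = 0 := hrep 2 0 0 (by decide)
    have v201 : b ![e 2, e 0, e 1] = e 3 := by
      rw [sw01, sw12, h123]; try simp
    have v202 : b ![e 2, e 0, e 2] = 0 := hrep 2 0 2 (by decide)
    have v203 : b ![e 2, e 0, e 3] = -e 1 := by
      rw [sw01, h134]; try simp
    have v210 : b ![e 2, e 1, e 0] = -e 3 := by
      rw [sw01, sw12, sw01, h123]; try simp
    have v211 : b ![e 2, e 1, e 1] = 0 := hrep 2 1 1 (by decide)
    have v212 : b ![e 2, e 1, e 2] = 0 := hrep 2 1 2 (by decide)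
    have v213 : b ![e 2, e 1, e 3] = e 0 := by
      rw [sw01, h234]; try simp
    have v220 : b ![e 2, e 2, e 0] = 0 := hrep 2 2 0 (by decide)
    have v221 : b ![e 2, e 2, e 1] = 0 := hrep 2 2 1 (by decide)
    have v222 : b ![e 2, e 2, e 2] = 0 := hrep 2 2 2 (by decide)
    have v223 : b ![e 2, e 2, e 3] = 0 := hrep 2 2 3 (by decide)
    have v230 : b ![e 2, e 3, e 0] = e 1 := by
      rw [sw12, sw01, h134]; try simp
    have v231 : b ![e 2, e 3, e 1] = -e 0 := by
      rw [sw12, sw01, h234]; try simp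
    have v232 : b ![e 2, e 3, e 2] = 0 := hrep 2 3 2 (by decide)
    have v233 : b ![e 2, e 3, e 3] = 0 := hrep 2 3 3 (by decide)
    have v300 : b ![e 3, e 0, e 0] = 0 := hrep 3 0 0 (by decide)
    have v301 : b ![e 3, e 0, e 1] = -e 2 := by
      rw [sw01, sw12, h124]; try simp
    have v302 : b ![e 3, e 0, e 2] = e 1 := by
      rw [sw01, sw12, h134]; try simp
    have v303 : b ![e 3, e 0, e 3] = 0 := hrep 3 0 3 (by decide)
    have v310 : b ![e 3, e 1, e 0] = e 2 := by
      rw [sw01, sw12, sw01, h124]; try simp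
    have v311 : b ![e 3, e 1, e 1] = 0 := hrep 3 1 1 (by decide)
    have v312 : b ![e 3, e 1, e 2] = -e 0 := by
      rw [sw01, sw12, h234]; try simp
    have v313 : b ![e 3, e 1, e 3] = 0 := hrep 3 1 3 (by decide)
    have v320 : b ![e 3, e 2, e 0] = -e 1 := by
      rw [sw01, sw12, sw01, h134]; try simp
    have v321 : b ![e 3, e 2, e 1] = e 0 := by
      rw [sw01, sw12, sw01, h234]; try simp
    have v322 : b ![e 3, e 2, e 2] = 0 := hrep 3 2 2 (by decide)
    have v323 : b ![e 3, e 2, e 3] = 0 := hrep 3 2 3 (by decide)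
    have v330 : b ![e 3, e 3, e 0] = 0 := hrep 3 3 0 (by decide)
    have v331 : b ![e 3, e 3, e 1] = 0 := hrep 3 3 1 (by decide)
    have v332 : b ![e 3, e 3, e 2] = 0 := hrep 3 3 2 (by decide)
    have v333 : b ![e 3, e 3, e 3] = 0 := hrep 3 3 3 (by decide)
    have q00 : bilin e (e 0) (e 0) = (1 : K) := by simp [bilin_basis]
    have q01 : bilin e (e 0) (e 1) = (0 : K) := by simp [bilin_basis]
    have q02 : bilin e (e 0) (e 2) = (0 : K) := by simp [bilin_basis]
    have q03 : bilin e (e 0) (e 3) = (0 : K) := by simp [bilin_basis]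
    have q10 : bilin e (e 1) (e 0) = (0 : K) := by simp [bilin_basis]
    have q11 : bilin e (e 1) (e 1) = (1 : K) := by simp [bilin_basis]
    have q12 : bilin e (e 1) (e 2) = (0 : K) := by simp [bilin_basis]
    have q13 : bilin e (e 1) (e 3) = (0 : K) := by simp [bilin_basis]
    have q20 : bilin e (e 2) (e 0) = (0 : K) := by simp [bilin_basis]
    have q21 : bilin e (e 2) (e 1) = (0 : K) := by simp [bilin_basis]
    have q22 : bilin e (e 2) (e 2) = (1 : K) := by simp [bilin_basis]
    have q23 : bilin e (e 2) (e 3) = (0 : K) := by simp [bilin_basis]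
    have q30 : bilin e (e 3) (e 0) = (0 : K) := by simp [bilin_basis]
    have q31 : bilin e (e 3) (e 1) = (0 : K) := by simp [bilin_basis]
    have q32 : bilin e (e 3) (e 2) = (0 : K) := by simp [bilin_basis]
    have q33 : bilin e (e 3) (e 3) = (1 : K) := by simp [bilin_basis]
    intro i m j k
    fin_cases i <;> fin_cases m <;> fin_cases j <;> fin_cases k <;>
      simp only [Fin.reduceFinMk, Fin.isValue, v000, v001, v002, v003, v010, v011, v012, v013, v020, v021, v022, v023, v030, v031, v032, v033, v100, v101, v102, v103, v110, v111, v112, v113, v120, v121, v122, v123, v130, v131, v132, v133, v200, v201, v202, v203, v210, v211, v212, v213, v220, v221, v222, v223, v230, v231, v232, v233, v300, v301, v302, v303, v310, v311, v312, v313, v320, v321, v322, v323, v330, v331, v332, v333, q00, q01, q02, q03, q10, q11, q12, q13, q20, q21, q22, q23, q30, q31, q32, q33, map_neg, LinearMap.neg_apply, map_zero,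
        LinearMap.zero_apply, neg_neg, neg_zero, add_zero, zero_add, add_neg_cancel,
        neg_add_cancel]
end Aux

/-- the 4-dimensional Lie 3-algebra with `[e_1,e_2,e_3]=e_4`,
`[e_1,e_2,e_4]=-e_3`, `[e_1,e_3,e_4]=e_2`, `[e_2,e_3,e_4]=-e_1` (skew-symmetric, zero
elsewhere) is perfect, but `D_3(L) = L⊗L` with `[a⊗b,c⊗d] = [a,c,d]⊗b + a⊗[b,c,d]`
is not a perfect Leibniz algebra; in particular `e_1⊗e_1 ∉ [L⊗L, L⊗L]`. -/
theorem dim4_lie3_not_perfect_tensor {K L : Type*} [Field K] [AddCommGroup L] [Module K L]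
    (b : MultilinearMap K (fun _ : Fin 3 => L) L) (hFI : FundId ⇑b)
    (e : Module.Basis (Fin 4) K L)
    (hskew : ∀ (σ : Equiv.Perm (Fin 3)) (v : Fin 3 → L),
      b (v ∘ σ) = (Equiv.Perm.sign σ : ℤ) • b v)
    (h123 : b ![e 0, e 1, e 2] = e 3)
    (h124 : b ![e 0, e 1, e 3] = - e 2)
    (h134 : b ![e 0, e 2, e 3] = e 1)
    (h234 : b ![e 1, e 2, e 3] = - e 0)
    (hrep : ∀ i j k : Fin 4, (i = j ∨ i = k ∨ j = k) → b ![e i, e j, e k] = 0) :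
    Submodule.span K (Set.range fun a : Fin 3 → L => b a) = ⊤ ∧
    ∀ B : L ⊗[K] L →ₗ[K] L ⊗[K] L →ₗ[K] L ⊗[K] L,
      (∀ x y z w : L, B (x ⊗ₜ[K] y) (z ⊗ₜ[K] w) =
        b ![x, z, w] ⊗ₜ[K] y + x ⊗ₜ[K] b ![y, z, w]) →
      e 0 ⊗ₜ[K] e 0 ∉ Submodule.span K {t : L ⊗[K] L | ∃ u v, t = B u v} ∧
      Submodule.span K {t : L ⊗[K] L | ∃ u v, t = B u v} ≠ ⊤ := by
  constructor
  · rw [eq_top_iff, ← e.span_eq]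
    refine Submodule.span_le.2 ?_
    have mem : ∀ a : Fin 3 → L, b a ∈ Submodule.span K (Set.range fun a : Fin 3 → L => b a) :=
      fun a => Submodule.subset_span ⟨a, rfl⟩
    rintro x ⟨i, rfl⟩
    fin_cases i
    · show e 0 ∈ _
      have h : e 0 = -b ![e 1, e 2, e 3] := by rw [h234]; simp
      rw [h]; exact neg_mem (mem _)
    · show e 1 ∈ _
      rw [← h134]; exact mem _
    · show e 2 ∈ _
      have h : e 2 = -b ![e 0, e 1, e 3] := by rw [h124]; simp
      rw [h]; exact neg_mem (mem _)
    · show e 3 ∈ _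
      rw [← h123]; exact mem _
  · intro B hB
    set φ : L ⊗[K] L →ₗ[K] K := TensorProduct.lift (bilin e) with hφ
    have key : ∀ x y z w : L, bilin e (b ![x, z, w]) y + bilin e x (b ![y, z, w]) = 0 := by
      have hQ : Qmap e b = 0 := by
        apply Module.Basis.ext_multilinear (fun _ => e)
        intro v
        have h0 := basis_inv b e hskew h123 h124 h134 h234 hrep (v 0) (v 1) (v 2) (v 3)
        simpa [Qmap] using h0
      intro x y z w
      have h1 := DFunLike.congr_fun hQ ![x, y, z, w]
      simpa [Qmap] using h1
    have hker : ∀ u v, φ (B u v) = 0 := by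
      intro u v
      induction u using TensorProduct.induction_on with
      | zero => simp
      | tmul x y =>
        induction v using TensorProduct.induction_on with
        | zero => simp
        | tmul z w =>
          rw [hB]
          simp only [map_add, hφ, TensorProduct.lift.tmul]
          exact key x y z w
        | add v1 v2 h1 h2 => rw [map_add, map_add, h1, h2, add_zero]
      | add u1 u2 h1 h2 => rw [map_add, LinearMap.add_apply, map_add, h1, h2, add_zero]
    have hspan : Submodule.span K {t : L ⊗[K] L | ∃ u v, t = B u v} ≤ LinearMap.ker φ := by
      rw [Submodule.span_le]
      rintro t ⟨u, v, rfl⟩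
      exact LinearMap.mem_ker.2 (hker u v)
    have hφe : φ (e 0 ⊗ₜ[K] e 0) = 1 := by
      rw [hφ, TensorProduct.lift.tmul, bilin_basis]
      simp
    have hnot : e 0 ⊗ₜ[K] e 0 ∉ Submodule.span K {t : L ⊗[K] L | ∃ u v, t = B u v} := by
      intro hmem
      have h2 := hspan hmem
      rw [LinearMap.mem_ker, hφe] at h2
      exact one_ne_zero h2
    refine ⟨hnot, fun h => hnot ?_⟩
    rw [h]
    trivial
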